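/- Let E ≥ 2 be an integer, γ ≥ 0, and a_k ≥ 0 satisfy a_0 = 0 and a_k ≤ (1 + 1/E)a_{k−1} + γ. Then ∑_{k=0}^{E−1} a_k ≤ E^2·((1 + 1/E)^E − 2)·γ ≤ (e − 2)·E^2·γ, where e is Euler's number. -/

import Mathlib

theorem local_drift_sum_bound (E : ℕ) (hE : 2 ≤ E) (γ : ℝ) (hγ : 0 ≤ γ)
    (a : ℕ → ℝ) (ha0 : a 0 = 0) (hnn : ∀ k, 0 ≤ a k)
    (hrec : ∀ k, 1 ≤ k → a k ≤ (1 + 1 / (E : ℝ)) * a (k - 1) + γ) :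
    ∑ k ∈ Finset.range E, a k ≤ (E : ℝ) ^ 2 * ((1 + 1 / (E : ℝ)) ^ E - 2) * γ ∧
    (E : ℝ) ^ 2 * ((1 + 1 / (E : ℝ)) ^ E - 2) * γ ≤ (Real.exp 1 - 2) * (E : ℝ) ^ 2 * γ := by
  have hE0 : (0:ℝ) < (E:ℝ) := by positivity
  set q : ℝ := 1 + 1 / (E : ℝ) with hq
  have hq1 : 1 ≤ q := by
    rw [hq]
    have : 0 ≤ 1 / (E:ℝ) := by positivity
    linarith
  have hEq : (E:ℝ) * q = (E:ℝ) + 1 := by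
    rw [hq, mul_add, mul_one, mul_one_div, div_self (ne_of_gt hE0)]
  -- pointwise bound
  have key : ∀ k, a k ≤ (E:ℝ) * (q ^ k - 1) * γ := by
    intro k
    induction k with
    | zero => simp [ha0]
    | succ n ih =>
      have h1 := hrec (n+1) (Nat.le_add_left 1 n)
      simp only [Nat.add_sub_cancel] at h1
      have h2 : q * a n ≤ q * ((E:ℝ) * (q ^ n - 1) * γ) := by
        apply mul_le_mul_of_nonneg_left ih (by linarith)
      have hqn : (1:ℝ) ≤ q ^ n := one_le_pow₀ hq1
      calc a (n+1) ≤ q * a n + γ := h1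
        _ ≤ q * ((E:ℝ) * (q ^ n - 1) * γ) + γ := by linarith
        _ = (E:ℝ) * (q ^ (n+1) - 1) * γ + ((E:ℝ) + 1 - (E:ℝ) * q) * γ := by ring
        _ = (E:ℝ) * (q ^ (n+1) - 1) * γ := by rw [hEq]; ring
  constructor
  · have hsum : ∑ k ∈ Finset.range E, a k ≤ ∑ k ∈ Finset.range E, (E:ℝ) * (q ^ k - 1) * γ :=
      Finset.sum_le_sum fun k _ => key k
    have hgeom : ∑ k ∈ Finset.range E, q ^ k = (E:ℝ) * (q ^ E - 1) := by
      have hqne : q ≠ 1 := by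
        have : 0 < 1 / (E:ℝ) := by positivity
        intro h; rw [hq] at h; linarith
      rw [geom_sum_eq hqne]
      have : q - 1 = 1 / (E:ℝ) := by rw [hq]; ring
      rw [this]
      field_simp
    calc ∑ k ∈ Finset.range E, a k ≤ ∑ k ∈ Finset.range E, (E:ℝ) * (q ^ k - 1) * γ := hsum
      _ = (E:ℝ) * γ * ((∑ k ∈ Finset.range E, q ^ k) - (E:ℝ)) := by
          have h1 : ∀ k ∈ Finset.range E, (E:ℝ) * (q ^ k - 1) * γ
              = (E:ℝ) * γ * q ^ k - (E:ℝ) * γ := fun k _ => by ring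
          rw [Finset.sum_congr rfl h1, Finset.sum_sub_distrib, ← Finset.mul_sum,
            Finset.sum_const, Finset.card_range, nsmul_eq_mul]
          ring
      _ = (E:ℝ) ^ 2 * (q ^ E - 2) * γ := by rw [hgeom]; ring
  · have hexp : q ^ E ≤ Real.exp 1 := by
      have h1 : q ≤ Real.exp (1 / (E:ℝ)) := by
        have := Real.add_one_le_exp (1 / (E:ℝ))
        linarith
      calc q ^ E ≤ Real.exp (1 / (E:ℝ)) ^ E := pow_le_pow_left₀ (by linarith) h1 E
        _ = Real.exp ((E:ℝ) * (1 / (E:ℝ))) := by rw [← Real.exp_nat_mul]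
        _ = Real.exp 1 := by rw [mul_one_div, div_self (ne_of_gt hE0)]
    have hE2 : (0:ℝ) ≤ (E:ℝ)^2 := by positivity
    nlinarith [mul_nonneg hE2 hγ]
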